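/- Let cap(r,Δ) be a cap of height Δ (with 0 ≤ Δ ≤ r) of a d-dimensional Euclidean ball of radius r. Then 2(2 - Δ/r)^{(d-1)/2} · vol_{d-1}(B_2^{d-1})/(d+1) · Δ^{(d+1)/2} · r^{(d-1)/2} ≤ vol_d(cap(r,Δ)) ≤ 2^{(d+1)/2} · vol_{d-1}(B_2^{d-1})/(d+1) · Δ^{(d+1)/2} · r^{(d-1)/2}. -/

import Mathlib

open MeasureTheory

open Metric in
lemma sliceVol (n : ℕ) (s : ℝ) (hs : 0 < s) :
    (volume : Measure (Fin n → ℝ)) {y | ∑ i, y i ^ 2 ≤ s} =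
      ENNReal.ofReal (s ^ ((n : ℝ) / 2)) *
        volume (Metric.closedBall (0 : EuclideanSpace ℝ (Fin n)) 1) := by
  have e := (EuclideanSpace.volume_preserving_symm_measurableEquiv_toLp (Fin n)).symm
  have hset : {y : Fin n → ℝ | ∑ i, y i ^ 2 ≤ s} =
      (MeasurableEquiv.toLp 2 (Fin n → ℝ)).symm.symm ⁻¹'
        (Metric.closedBall (0 : EuclideanSpace ℝ (Fin n)) (Real.sqrt s)) := by
    ext y
    simp only [Set.mem_preimage, mem_closedBall_zero_iff, Set.mem_setOf_eq,
      EuclideanSpace.norm_eq, Real.norm_eq_abs, sq_abs]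
    rw [Real.sqrt_le_sqrt_iff hs.le]
    exact Iff.rfl
  rw [hset, e.measure_preimage (measurableSet_closedBall.nullMeasurableSet),
    Measure.addHaar_closedBall' _ _ (Real.sqrt_nonneg s)]
  congr 1
  rw [finrank_euclideanSpace_fin]
  rw [← Real.rpow_natCast (Real.sqrt s) n, Real.sqrt_eq_rpow, ← Real.rpow_mul hs.le]
  ring_nf

open Metric in
lemma capVol (n : ℕ) (r Δ : ℝ) (hr : 0 < r) (hΔ0 : 0 ≤ Δ) (hΔr : Δ ≤ r) :
    volume {x : EuclideanSpace ℝ (Fin (n+1)) |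
        x ∈ Metric.closedBall 0 r ∧ r - Δ ≤ x (Fin.last n)} =
      ∫⁻ t in Set.Ioo (r-Δ) r, ENNReal.ofReal ((r^2 - t^2) ^ ((n : ℝ)/2)) *
        volume (Metric.closedBall (0 : EuclideanSpace ℝ (Fin n)) 1) := by
  set V := volume (Metric.closedBall (0 : EuclideanSpace ℝ (Fin n)) 1) with hV
  set T : Set (ℝ × (Fin n → ℝ)) :=
    {p | p.1 ^ 2 + ∑ i, p.2 i ^ 2 ≤ r ^ 2 ∧ r - Δ ≤ p.1} with hT
  have hmeas1 : Measurable fun p : ℝ × (Fin n → ℝ) => p.1 ^ 2 + ∑ i, p.2 i ^ 2 :=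
    (measurable_fst.pow_const 2).add
      (Finset.measurable_sum _ fun i _ => ((measurable_pi_apply i).comp measurable_snd).pow_const 2)
  have hTmeas : MeasurableSet T :=
    (measurableSet_le hmeas1 measurable_const).inter
      (measurableSet_le measurable_const measurable_fst)
  -- step 1 : to the pi type
  have h1 : volume {x : EuclideanSpace ℝ (Fin (n+1)) |
        x ∈ Metric.closedBall 0 r ∧ r - Δ ≤ x (Fin.last n)} =
      (volume : Measure (Fin (n+1) → ℝ))
        {x | ∑ i, x i ^ 2 ≤ r ^ 2 ∧ r - Δ ≤ x (Fin.last n)} := by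
    have hset : {x : EuclideanSpace ℝ (Fin (n+1)) |
        x ∈ Metric.closedBall 0 r ∧ r - Δ ≤ x (Fin.last n)} =
        (MeasurableEquiv.toLp 2 (Fin (n+1) → ℝ)).symm ⁻¹'
          {x : Fin (n+1) → ℝ | ∑ i, x i ^ 2 ≤ r ^ 2 ∧ r - Δ ≤ x (Fin.last n)} := by
      ext x
      simp only [Set.mem_preimage, Set.mem_setOf_eq, mem_closedBall_zero_iff,
        EuclideanSpace.norm_eq, Real.norm_eq_abs, sq_abs, Real.sqrt_le_iff]
      constructor
      · rintro ⟨⟨-, h⟩, h'⟩; exact ⟨h, h'⟩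
      · rintro ⟨h, h'⟩; exact ⟨⟨hr.le, h⟩, h'⟩
    rw [hset]
    refine (EuclideanSpace.volume_preserving_symm_measurableEquiv_toLp (Fin (n+1))).measure_preimage ?_
    refine MeasurableSet.nullMeasurableSet (MeasurableSet.inter ?_ ?_)
    · exact measurableSet_le
        (Finset.measurable_sum _ fun i _ => (measurable_pi_apply i).pow_const 2) measurable_const
    · exact measurableSet_le measurable_const (measurable_pi_apply _)
  -- step 2 : split off the last coordinate
  have h2 : (volume : Measure (Fin (n+1) → ℝ))
        {x | ∑ i, x i ^ 2 ≤ r ^ 2 ∧ r - Δ ≤ x (Fin.last n)} =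
      ((volume : Measure ℝ).prod (volume : Measure (Fin n → ℝ))) T := by
    set F := MeasurableEquiv.piFinSuccAbove (fun _ : Fin (n+1) => ℝ) (Fin.last n) with hF
    have hF1 : ∀ x : Fin (n+1) → ℝ, (F x).1 = x (Fin.last n) := fun _ => rfl
    have hF2 : ∀ (x : Fin (n+1) → ℝ) (j : Fin n), (F x).2 j = x (Fin.castSucc j) := by
      intro x j
      show x ((Fin.last n).succAbove j) = x (Fin.castSucc j)
      rw [Fin.succAbove_last]
    have hset : {x : Fin (n+1) → ℝ | ∑ i, x i ^ 2 ≤ r ^ 2 ∧ r - Δ ≤ x (Fin.last n)} =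
        F ⁻¹' T := by
      ext x
      simp only [Set.mem_preimage, hT, Set.mem_setOf_eq, hF1, hF2]
      rw [Fin.sum_univ_castSucc]
      constructor
      · rintro ⟨h, h'⟩; exact ⟨by linarith, h'⟩
      · rintro ⟨h, h'⟩; exact ⟨by linarith, h'⟩
    rw [hset]
    exact (volume_preserving_piFinSuccAbove (fun _ : Fin (n+1) => ℝ) (Fin.last n)).measure_preimage
      hTmeas.nullMeasurableSet
  -- step 3 : Fubini
  have h3 : ((volume : Measure ℝ).prod (volume : Measure (Fin n → ℝ))) T =
      ∫⁻ t : ℝ, (volume : Measure (Fin n → ℝ)) (Prod.mk t ⁻¹' T) :=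
    Measure.prod_apply hTmeas
  -- step 4 : identify the slices a.e.
  have h4 : ∫⁻ t : ℝ, (volume : Measure (Fin n → ℝ)) (Prod.mk t ⁻¹' T) =
      ∫⁻ t in Set.Ioo (r-Δ) r, ENNReal.ofReal ((r^2 - t^2) ^ ((n : ℝ)/2)) * V := by
    rw [← lintegral_indicator measurableSet_Ioo]
    apply lintegral_congr_ae
    have hnull : (volume : Measure ℝ) {r - Δ, r} = 0 :=
      (Set.toFinite _).measure_zero _
    filter_upwards [measure_eq_zero_iff_ae_notMem.mp hnull] with t ht
    simp only [Set.mem_insert_iff, Set.mem_singleton_iff, not_or] at ht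
    by_cases hmem : t ∈ Set.Ioo (r - Δ) r
    · rw [Set.indicator_of_mem hmem]
      obtain ⟨h1', h2'⟩ := hmem
      have hslice : Prod.mk t ⁻¹' T = {y : Fin n → ℝ | ∑ i, y i ^ 2 ≤ r ^ 2 - t ^ 2} := by
        ext y
        simp only [Set.mem_preimage, hT, Set.mem_setOf_eq]
        constructor
        · rintro ⟨h, -⟩; linarith
        · intro h; exact ⟨by linarith, by linarith⟩
      rw [hslice]
      have hpos : 0 < r ^ 2 - t ^ 2 := by nlinarith
      exact sliceVol n _ hpos
    · rw [Set.indicator_of_notMem hmem]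
      rw [Set.mem_Ioo, not_and_or] at hmem
      push_neg at hmem
      have hslice : Prod.mk t ⁻¹' T = (∅ : Set (Fin n → ℝ)) := by
        ext y
        simp only [Set.mem_preimage, hT, Set.mem_setOf_eq, Set.mem_empty_iff_false,
          iff_false, not_and]
        intro h h'
        have hsum : 0 ≤ ∑ i, y i ^ 2 := by positivity
        rcases hmem with hm | hm
        · exact ht.1 (le_antisymm hm h')
        · have : r < t := lt_of_le_of_ne hm (Ne.symm ht.2)
          nlinarith
      rw [hslice]
      simp
  rw [h1, h2, h3, h4]

open Metric Set intervalIntegral in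
lemma rpowInt (p Δ r : ℝ) (hp : 0 ≤ p) (hΔ : 0 ≤ Δ) :
    ∫⁻ t in Set.Ioo (r - Δ) r, ENNReal.ofReal ((r - t) ^ p) =
      ENNReal.ofReal (Δ ^ (p + 1) / (p + 1)) := by
  have hcont : Continuous fun t : ℝ => (r - t) ^ p := by
    have h1 : Continuous fun x : ℝ => x ^ p :=
      continuous_iff_continuousAt.2 fun x => Real.continuousAt_rpow_const _ _ (Or.inr hp)
    exact h1.comp (continuous_const.sub continuous_id)
  rw [show (volume : Measure ℝ).restrict (Set.Ioo (r - Δ) r) =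
      (volume : Measure ℝ).restrict (Set.Ioc (r - Δ) r) from
    Measure.restrict_congr_set Ioo_ae_eq_Ioc]
  rw [← ofReal_integral_eq_lintegral_ofReal (hcont.integrableOn_Ioc)
    (Filter.eventually_of_mem (self_mem_ae_restrict measurableSet_Ioc)
      (fun t ht => Real.rpow_nonneg (by simp only [Set.mem_Ioc] at ht; linarith) p))]
  congr 1
  rw [← intervalIntegral.integral_of_le (by linarith : r - Δ ≤ r)]
  have := intervalIntegral.integral_comp_sub_left (a := r - Δ) (b := r)
    (fun u : ℝ => u ^ p) r
  rw [this]
  have h0 : r - r = 0 := by ring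
  have h1 : r - (r - Δ) = Δ := by ring
  rw [h0, h1, integral_rpow (Or.inl (by linarith : (-1:ℝ) < p))]
  rw [Real.zero_rpow (by linarith : p + 1 ≠ 0)]
  ring_nf

theorem stmt_1 (d : ℕ) (hd : 1 ≤ d) (r Δ : ℝ) (hr : 0 < r) (hΔ0 : 0 ≤ Δ) (hΔr : Δ ≤ r)
    (cap : Set (EuclideanSpace ℝ (Fin d)))
    (hcap : cap = {x : EuclideanSpace ℝ (Fin d) |
      x ∈ Metric.closedBall 0 r ∧ r - Δ ≤ x ⟨d - 1, by omega⟩})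
    (voldball : ℝ)
    (hvol : voldball = (volume (Metric.closedBall (0 : EuclideanSpace ℝ (Fin (d - 1))) 1)).toReal) :
    2 * (2 - Δ / r) ^ (((d : ℝ) - 1) / 2) * (voldball / ((d : ℝ) + 1)) *
        Δ ^ (((d : ℝ) + 1) / 2) * r ^ (((d : ℝ) - 1) / 2) ≤
      (volume cap).toReal ∧
    (volume cap).toReal ≤
      (2 : ℝ) ^ (((d : ℝ) + 1) / 2) * (voldball / ((d : ℝ) + 1)) *
        Δ ^ (((d : ℝ) + 1) / 2) * r ^ (((d : ℝ) - 1) / 2) := by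
  obtain ⟨n, rfl⟩ : ∃ n, d = n + 1 := ⟨d - 1, by omega⟩
  set p : ℝ := (n : ℝ) / 2 with hp
  set q : ℝ := p + 1 with hq
  have hp0 : 0 ≤ p := by positivity
  have hq0 : 0 < q := by positivity
  set V : ENNReal := volume (Metric.closedBall (0 : EuclideanSpace ℝ (Fin n)) 1) with hVdef
  have hVfin : V ≠ ⊤ := measure_closedBall_lt_top.ne
  have hvoldball : voldball = V.toReal := hvol
  -- basic inequalities
  have h2rΔ : 0 ≤ 2 * r - Δ := by linarith
  have hIoo : MeasurableSet (Set.Ioo (r - Δ) r) := measurableSet_Ioo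
  -- the cap volume as an integral
  have hcapvol : volume cap =
      ∫⁻ t in Set.Ioo (r-Δ) r, ENNReal.ofReal ((r^2 - t^2) ^ p) * V := by
    rw [hcap]; exact capVol n r Δ hr hΔ0 hΔr
  -- base integral
  have hbase : ∫⁻ t in Set.Ioo (r - Δ) r, ENNReal.ofReal ((r - t) ^ p) =
      ENNReal.ofReal (Δ ^ q / q) := rpowInt p Δ r hp0 hΔ0
  -- constant-multiple integrals
  have hconst : ∀ c : ℝ, 0 ≤ c →
      ∫⁻ t in Set.Ioo (r - Δ) r, ENNReal.ofReal (c * (r - t) ^ p) * V =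
        ENNReal.ofReal c * (ENNReal.ofReal (Δ ^ q / q) * V) := by
    intro c hc
    calc ∫⁻ t in Set.Ioo (r - Δ) r, ENNReal.ofReal (c * (r - t) ^ p) * V
        = ∫⁻ t in Set.Ioo (r - Δ) r,
            ENNReal.ofReal c * (ENNReal.ofReal ((r - t) ^ p) * V) := by
          congr 1; funext t; rw [ENNReal.ofReal_mul hc, mul_assoc]
      _ = ENNReal.ofReal c * ∫⁻ t in Set.Ioo (r - Δ) r,
            ENNReal.ofReal ((r - t) ^ p) * V :=
          lintegral_const_mul' _ _ ENNReal.ofReal_ne_top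
      _ = ENNReal.ofReal c * ((∫⁻ t in Set.Ioo (r - Δ) r,
            ENNReal.ofReal ((r - t) ^ p)) * V) := by
          rw [lintegral_mul_const' _ _ hVfin]
      _ = ENNReal.ofReal c * (ENNReal.ofReal (Δ ^ q / q) * V) := by rw [hbase]
  -- pointwise bounds
  have hlow : ENNReal.ofReal ((2*r - Δ) ^ p) * (ENNReal.ofReal (Δ ^ q / q) * V) ≤
      volume cap := by
    rw [hcapvol, ← hconst _ (by positivity : (0:ℝ) ≤ (2*r - Δ) ^ p)]
    · refine setLIntegral_mono' hIoo fun t ht => ?_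
      obtain ⟨ht1, ht2⟩ := ht
      refine mul_le_mul_left (ENNReal.ofReal_le_ofReal ?_) V
      rw [← Real.mul_rpow h2rΔ (by linarith : (0:ℝ) ≤ r - t)]
      exact Real.rpow_le_rpow (by nlinarith) (by nlinarith) hp0
  have hup : volume cap ≤
      ENNReal.ofReal ((2*r) ^ p) * (ENNReal.ofReal (Δ ^ q / q) * V) := by
    rw [hcapvol, ← hconst _ (by positivity : (0:ℝ) ≤ (2*r) ^ p)]
    · refine setLIntegral_mono' hIoo fun t ht => ?_
      obtain ⟨ht1, ht2⟩ := ht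
      refine mul_le_mul_left (ENNReal.ofReal_le_ofReal ?_) V
      rw [← Real.mul_rpow (by linarith : (0:ℝ) ≤ 2*r) (by linarith : (0:ℝ) ≤ r - t)]
      exact Real.rpow_le_rpow (by nlinarith) (by nlinarith) hp0
  -- finiteness
  have hupfin : ENNReal.ofReal ((2*r) ^ p) * (ENNReal.ofReal (Δ ^ q / q) * V) ≠ ⊤ :=
    ENNReal.mul_ne_top ENNReal.ofReal_ne_top (ENNReal.mul_ne_top ENNReal.ofReal_ne_top hVfin)
  have hcapfin : volume cap ≠ ⊤ := (lt_of_le_of_lt hup hupfin.lt_top).ne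
  -- real versions
  have hlowR : (2*r - Δ) ^ p * (Δ ^ q / q * V.toReal) ≤ (volume cap).toReal := by
    have := ENNReal.toReal_mono hcapfin hlow
    rwa [ENNReal.toReal_mul, ENNReal.toReal_mul, ENNReal.toReal_ofReal (by positivity),
      ENNReal.toReal_ofReal (by positivity)] at this
  have hupR : (volume cap).toReal ≤ (2*r) ^ p * (Δ ^ q / q * V.toReal) := by
    have := ENNReal.toReal_mono hupfin hup
    rwa [ENNReal.toReal_mul, ENNReal.toReal_mul, ENNReal.toReal_ofReal (by positivity),
      ENNReal.toReal_ofReal (by positivity)] at this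
  -- cast cleanup
  have e1 : (((n+1 : ℕ) : ℝ) - 1) / 2 = p := by push_cast; ring
  have e2 : (((n+1 : ℕ) : ℝ) + 1) / 2 = q := by push_cast [hq, hp]; ring
  have e3 : ((n+1 : ℕ) : ℝ) + 1 = (n : ℝ) + 2 := by push_cast; ring
  rw [e1, e2, e3, hvoldball]
  have hn2 : ((n : ℝ) + 2) ≠ 0 := by positivity
  have hVnn : 0 ≤ V.toReal := ENNReal.toReal_nonneg
  have hq' : q = ((n : ℝ) + 2) / 2 := by rw [hq, hp]; ring
  have hdiv : Δ ^ q / q = Δ ^ q * 2 / ((n : ℝ) + 2) := by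
    rw [hq', div_div_eq_mul_div]
  have hΔr1 : 0 ≤ 2 - Δ / r := by
    rw [sub_nonneg]
    have : Δ / r ≤ 1 := by rw [div_le_one hr]; exact hΔr
    linarith
  constructor
  · refine le_trans (le_of_eq ?_) hlowR
    have h2r : (2*r - Δ) = (2 - Δ/r) * r := by field_simp
    rw [h2r, Real.mul_rpow hΔr1 hr.le, hdiv]
    ring
  · refine le_trans hupR (le_of_eq ?_)
    rw [Real.mul_rpow (by norm_num : (0:ℝ) ≤ 2) hr.le,
      show (2:ℝ) ^ q = 2 ^ p * 2 from by rw [hq, Real.rpow_add_one (by norm_num : (2:ℝ) ≠ 0)],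
      hdiv]
    ring
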